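/- Let m ≥ 1 and n = 2m+1. The maximum of γ_n + 2∑_{i=1}^{n−1} γ_i, taken over all tuples (γ_1,…,γ_n) of nonnegative reals such that the spectral norm of the n×n symmetric Toeplitz matrix Toeplitz(γ_n,…,γ_1) is at most 1, is attained and equals 2 ∑_{i=0}^{m−1} ξ_i² + ξ_m². (This is the optimal value of the nonnegative adversary bound for ordered search on 2m+1 inputs.) -/

import Mathlib

/-- `ξ i = C(2i, i) / 4^i`. -/
noncomputable def xi (i : ℕ) : ℝ := (Nat.choose (2 * i) i : ℝ) / 4 ^ i

/-- `toeplitz n γ` is the `n×n` symmetric Toeplitz matrix `Toeplitz(γ_n, …, γ_1)` whose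
`(i,j)` entry (for `1 ≤ i, j ≤ n`) is `γ_{n − |i−j|}`. -/
def toeplitz (n : ℕ) (γ : ℕ → ℝ) : Matrix (Fin n) (Fin n) ℝ :=
  Matrix.of fun i j => γ (n - (max (i : ℕ) (j : ℕ) - min (i : ℕ) (j : ℕ)))

/-- The spectral norm (largest singular value) of a real matrix, as the operator norm
of its action on Euclidean space. -/
noncomputable def sNorm {n : ℕ} (M : Matrix (Fin n) (Fin n) ℝ) : ℝ :=
  ‖Matrix.toEuclideanCLM (𝕜 := ℝ) M‖

open Finset
open scoped RealInnerProductSpace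

lemma xi_zero : xi 0 = 1 := by simp [xi]

lemma xi_pos (i : ℕ) : 0 < xi i := by
  have h : 0 < Nat.choose (2 * i) i := Nat.choose_pos (by omega)
  have h1 : (0:ℝ) < Nat.choose (2 * i) i := by exact_mod_cast h
  have h2 : (0:ℝ) < 4 ^ i := by positivity
  exact div_pos h1 h2

/-- `(2k+2) ξ_{k+1} = (2k+1) ξ_k` -/
lemma xi_rec (k : ℕ) : (2 * (k:ℝ) + 2) * xi (k+1) = (2 * k + 1) * xi k := by
  have h := Nat.succ_mul_centralBinom_succ k
  have h2 : ((k:ℝ) + 1) * (Nat.centralBinom (k+1) : ℝ) = 2 * (2 * k + 1) * Nat.centralBinom k := by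
    exact_mod_cast congrArg (Nat.cast : ℕ → ℝ) h
  have e1 : xi (k+1) = (Nat.centralBinom (k+1) : ℝ) / 4 ^ (k+1) := by
    simp [xi, Nat.centralBinom, Nat.mul_succ]
  have e0 : xi k = (Nat.centralBinom k : ℝ) / 4 ^ k := by
    simp [xi, Nat.centralBinom]
  rw [e1, e0]
  have h4 : (0:ℝ) < 4 ^ k := by positivity
  have h5 : (4:ℝ) ^ (k+1) = 4 * 4 ^ k := by ring
  rw [h5]
  field_simp
  linear_combination 2 * h2
lemma xi_succ_lt (k : ℕ) : xi (k+1) < xi k := by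
  have h := xi_rec k
  nlinarith [xi_pos (k+1), xi_pos k]

lemma xi_anti : StrictAnti xi := strictAnti_nat_of_succ_lt xi_succ_lt

lemma xi_le {a b : ℕ} (h : a ≤ b) : xi b ≤ xi a := xi_anti.antitone h

lemma xi_le_one (i : ℕ) : xi i ≤ 1 := by
  simpa [xi_zero] using xi_le (Nat.zero_le i)

lemma xi_weighted (t : ℕ) : ∑ i ∈ range (t+1), (i:ℝ) * xi i * xi (t - i)
    = t * (∑ i ∈ range (t+1), xi i * xi (t - i)) / 2 := by
  have hrefl : ∑ i ∈ range (t+1), (i:ℝ) * xi i * xi (t - i)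
      = ∑ i ∈ range (t+1), ((t - i : ℕ):ℝ) * xi (t - i) * xi i := by
    rw [← Finset.sum_range_reflect]
    apply Finset.sum_congr rfl
    intro i hi
    simp only [Finset.mem_range] at hi
    have h1 : t + 1 - 1 - i = t - i := by omega
    have h2 : t - (t - i) = i := by omega
    rw [h1, h2]
  have hsum : ∑ i ∈ range (t+1), (i:ℝ) * xi i * xi (t - i)
        + ∑ i ∈ range (t+1), (i:ℝ) * xi i * xi (t - i)
        = t * (∑ i ∈ range (t+1), xi i * xi (t - i)) := by
    nth_rewrite 2 [hrefl]
    rw [← Finset.sum_add_distrib, Finset.mul_sum]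
    apply Finset.sum_congr rfl
    intro i hi
    simp only [Finset.mem_range] at hi
    have hc : ((t - i : ℕ):ℝ) = (t:ℝ) - i := by
      have : i ≤ t := by omega
      push_cast [this]; ring
    rw [hc]; ring
  linarith

/-- The central convolution identity `∑_{i=0}^k ξ_i ξ_{k-i} = 1`. -/
lemma xi_conv (k : ℕ) : ∑ i ∈ range (k+1), xi i * xi (k - i) = 1 := by
  induction k with
  | zero => simp [xi_zero]
  | succ k ih =>
    have step : ∑ i ∈ range (k+2), (i:ℝ) * xi i * xi (k+1 - i)
        = (∑ j ∈ range (k+1), (j:ℝ) * xi j * xi (k - j))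
          + (∑ i ∈ range (k+1), xi i * xi (k - i)) / 2 := by
      rw [Finset.sum_range_succ' (fun i => (i:ℝ) * xi i * xi (k+1 - i)) (k+1)]
      simp only [Nat.cast_zero, zero_mul, add_zero, mul_zero, Nat.cast_add, Nat.cast_one]
      have hc : ∀ j ∈ range (k+1), ((j:ℝ)+1) * xi (j+1) * xi (k+1-(j+1))
          = (j:ℝ) * xi j * xi (k - j) + xi j * xi (k - j) / 2 := by
        intro j hj
        have hr := xi_rec j
        have h2 : k + 1 - (j+1) = k - j := by omega
        rw [h2]
        nlinarith [xi_pos (k - j)]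
      rw [Finset.sum_congr rfl hc, Finset.sum_add_distrib, ← Finset.sum_div]
    have h1 := xi_weighted (k+1)
    have h2 := xi_weighted k
    rw [h1, h2] at step
    have hk1 : (0:ℝ) < (k:ℝ) + 1 := by positivity
    push_cast at step
    have hSS : ∑ i ∈ range (k+1+1), xi i * xi (k+1 - i) = ∑ i ∈ range (k+1), xi i * xi (k - i) := by
      have := step
      field_simp at this
      nlinarith [this]
    rw [hSS, ih]

/-- Triangular sum: column form equals antidiagonal form. -/
lemma tri_eq (F : ℕ → ℕ → ℝ) : ∀ t : ℕ,
    ∑ j ∈ range (t+1), ∑ l ∈ range (t+1-j), F j l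
      = ∑ k ∈ range (t+1), ∑ j ∈ range (k+1), F j (k-j) := by
  intro t
  induction t with
  | zero => simp
  | succ t ih =>
    rw [Finset.sum_range_succ (fun j => ∑ l ∈ range (t+2-j), F j l) (t+1)]
    have h1 : ∀ j ∈ range (t+1), ∑ l ∈ range (t+2-j), F j l
        = ∑ l ∈ range (t+1-j), F j l + F j (t+1-j) := by
      intro j hj
      simp only [Finset.mem_range] at hj
      have : t + 2 - j = (t+1-j) + 1 := by omega
      rw [this, Finset.sum_range_succ]
    rw [Finset.sum_congr rfl h1, Finset.sum_add_distrib, ih]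
    rw [Finset.sum_range_succ (fun k => ∑ j ∈ range (k+1), F j (k-j)) (t+1)]
    have h2 : t + 2 - (t+1) = 1 := by omega
    rw [h2]
    rw [Finset.sum_range_succ (fun j => F j (t+1-j)) (t+1)]
    simp only [Finset.sum_range_one]
    have h3 : t + 1 - (t+1) = 0 := by omega
    rw [h3]
    ring

/-- Swap the two indices in a triangular sum `j + l ≤ t`. -/
lemma tri_swap (F : ℕ → ℕ → ℝ) (t : ℕ) :
    ∑ j ∈ range (t+1), ∑ l ∈ range (t+1-j), F j l
      = ∑ l ∈ range (t+1), ∑ j ∈ range (t+1-l), F j l := by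
  rw [tri_eq F t, tri_eq (fun l j => F j l) t]
  apply Finset.sum_congr rfl
  intro k hk
  simp only [Finset.mem_range] at hk
  rw [← Finset.sum_range_reflect (fun j => F j (k-j)) (k+1)]
  apply Finset.sum_congr rfl
  intro j hj
  simp only [Finset.mem_range] at hj
  have h1 : k + 1 - 1 - j = k - j := by omega
  have h2 : k - (k - j) = j := by omega
  rw [h1, h2]


lemma double_sum_split_aux (F : ℕ → ℕ → ℝ) (hsymm : ∀ i j, F i j = F j i) : ∀ n : ℕ,
    ∑ i ∈ range (n+1), ∑ j ∈ range (n+1), F i j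
      = ∑ i ∈ range (n+1), F i i + 2 * ∑ l ∈ range n, ∑ i ∈ range (n-l), F i (i+l+1) := by
  intro n
  induction n with
  | zero => simp
  | succ n ih =>
    have hL : ∑ i ∈ range (n+2), ∑ j ∈ range (n+2), F i j
        = ∑ i ∈ range (n+1), ∑ j ∈ range (n+1), F i j
          + 2 * ∑ i ∈ range (n+1), F i (n+1) + F (n+1) (n+1) := by
      rw [Finset.sum_range_succ (fun i => ∑ j ∈ range (n+2), F i j) (n+1)]
      have h1 : ∀ i ∈ range (n+1), ∑ j ∈ range (n+2), F i j
          = ∑ j ∈ range (n+1), F i j + F i (n+1) := by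
        intro i _; rw [Finset.sum_range_succ]
      rw [Finset.sum_congr rfl h1, Finset.sum_add_distrib]
      rw [Finset.sum_range_succ (fun j => F (n+1) j) (n+1)]
      have h2 : ∑ j ∈ range (n+1), F (n+1) j = ∑ j ∈ range (n+1), F j (n+1) :=
        Finset.sum_congr rfl (fun j _ => hsymm (n+1) j)
      rw [h2]; ring
    have hOff : ∑ l ∈ range (n+1), ∑ i ∈ range (n+1-l), F i (i+l+1)
        = ∑ l ∈ range n, ∑ i ∈ range (n-l), F i (i+l+1) + ∑ i ∈ range (n+1), F i (n+1) := by
      rw [Finset.sum_range_succ (fun l => ∑ i ∈ range (n+1-l), F i (i+l+1)) n]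
      have h3 : ∀ l ∈ range n, ∑ i ∈ range (n+1-l), F i (i+l+1)
          = ∑ i ∈ range (n-l), F i (i+l+1) + F (n-l) (n+1) := by
        intro l hl
        simp only [Finset.mem_range] at hl
        have e1 : n + 1 - l = (n-l) + 1 := by omega
        have e2 : n - l + l + 1 = n + 1 := by omega
        rw [e1, Finset.sum_range_succ, e2]
      rw [Finset.sum_congr rfl h3, Finset.sum_add_distrib]
      have h4 : ∑ l ∈ range n, F (n-l) (n+1) + ∑ i ∈ range (n+1-n), F i (i+n+1)
          = ∑ i ∈ range (n+1), F i (n+1) := by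
        have e3 : n + 1 - n = 1 := by omega
        rw [e3]
        simp only [Finset.sum_range_one, zero_add]
        rw [Finset.sum_range_succ' (fun i => F i (n+1)) n]
        congr 1
        rw [← Finset.sum_range_reflect (fun l => F (l+1) (n+1)) n]
        apply Finset.sum_congr rfl
        intro l hl
        simp only [Finset.mem_range] at hl
        have : n - 1 - l + 1 = n - l := by omega
        rw [this]
      linarith [h4]
    rw [hL, ih, hOff, Finset.sum_range_succ (fun i => F i i) (n+1)]
    ring

/-- Splitting a symmetric double sum into diagonal and off-diagonal parts. -/
lemma double_sum_split (F : ℕ → ℕ → ℝ) (hsymm : ∀ i j, F i j = F j i) (n : ℕ) :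
    ∑ i ∈ range (n+1), ∑ j ∈ range (n+1), F i j
      = ∑ i ∈ range (n+1), F i i + 2 * ∑ l ∈ range n, ∑ i ∈ range (n-l), F i (i+l+1) :=
  double_sum_split_aux F hsymm n

noncomputable def beta : ℕ → ℝ
  | 0 => 1
  | (j+1) => xi (j+1) - xi j

@[simp] lemma beta_zero : beta 0 = 1 := rfl
lemma beta_succ (j : ℕ) : beta (j+1) = xi (j+1) - xi j := rfl

lemma beta_succ_nonpos (j : ℕ) : beta (j+1) ≤ 0 := by
  rw [beta_succ]; linarith [xi_le (Nat.le_succ j)]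

lemma beta_partial (t : ℕ) : ∑ j ∈ range (t+1), beta j = xi t := by
  induction t with
  | zero => simp [xi_zero]
  | succ t ih => rw [Finset.sum_range_succ, ih, beta_succ]; ring

lemma beta_conv (t : ℕ) : ∑ j ∈ range (t+1), beta j * xi (t - j)
    = if t = 0 then 1 else 0 := by
  cases t with
  | zero => simp [xi_zero]
  | succ s =>
    simp only [Nat.succ_ne_zero, if_false]
    rw [Finset.sum_range_succ' (fun j => beta j * xi (s+1-j)) (s+1)]
    simp only [beta_zero, one_mul, Nat.sub_zero]
    have h1 : ∀ j ∈ range (s+1), beta (j+1) * xi (s+1-(j+1))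
        = (xi (j+1) - xi j) * xi (s - j) := by
      intro j hj
      have : s + 1 - (j+1) = s - j := by omega
      rw [this, beta_succ]
    rw [Finset.sum_congr rfl h1]
    have h2 : ∑ j ∈ range (s+1), (xi (j+1) - xi j) * xi (s - j)
        = ∑ j ∈ range (s+1), xi (j+1) * xi (s - j) - ∑ j ∈ range (s+1), xi j * xi (s - j) := by
      rw [← Finset.sum_sub_distrib]
      exact Finset.sum_congr rfl (fun j _ => by ring)
    have h3 : ∑ j ∈ range (s+1), xi (j+1) * xi (s - j) = 1 - xi (s+1) := by
      have := xi_conv (s+1)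
      rw [Finset.sum_range_succ' (fun i => xi i * xi (s+1-i)) (s+1)] at this
      simp only [xi_zero, one_mul, Nat.sub_zero] at this
      have h4 : ∀ j ∈ range (s+1), xi (j+1) * xi (s+1-(j+1)) = xi (j+1) * xi (s - j) := by
        intro j hj
        have : s + 1 - (j+1) = s - j := by omega
        rw [this]
      rw [Finset.sum_congr rfl h4] at this
      linarith
    rw [h2, h3, xi_conv s]
    ring

noncomputable def Aseq (m k : ℕ) : ℝ := ∑ j ∈ range (k+1), beta j * xi (m - k + j)

noncomputable def cseq (m k : ℕ) : ℝ := Aseq m k - xi m / 2 * beta k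

lemma cseq_zero (m : ℕ) : cseq m 0 = xi m / 2 := by
  simp [cseq, Aseq]; ring

lemma cseq_nonneg (m k : ℕ) (hk : k ≤ m) : 0 ≤ cseq m k := by
  cases k with
  | zero => rw [cseq_zero]; linarith [xi_pos m]
  | succ s =>
    have hA : Aseq m (s+1) ≥ xi (m - (s+1)) - xi (m - (s+1) + 1) := by
      rw [Aseq, Finset.sum_range_succ' (fun j => beta j * xi (m - (s+1) + j)) (s+1)]
      simp only [beta_zero, one_mul, Nat.add_zero]
      have hterm : ∀ j ∈ range (s+1), beta (j+1) * xi (m - (s+1) + (j+1))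
          ≥ beta (j+1) * xi (m - (s+1) + 1) := by
        intro j hj
        apply mul_le_mul_of_nonpos_left _ (beta_succ_nonpos j)
        exact xi_le (by omega)
      have hsum : ∑ j ∈ range (s+1), beta (j+1) * xi (m - (s+1) + (j+1))
          ≥ ∑ j ∈ range (s+1), beta (j+1) * xi (m - (s+1) + 1) :=
        Finset.sum_le_sum (fun j hj => hterm j hj)
      have hb : ∑ j ∈ range (s+1), beta (j+1) = xi (s+1) - 1 := by
        have := beta_partial (s+1)
        rw [Finset.sum_range_succ' beta (s+1)] at this
        simp only [beta_zero] at this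
        linarith
      have hrw : ∑ j ∈ range (s+1), beta (j+1) * xi (m - (s+1) + 1)
          = (xi (s+1) - 1) * xi (m - (s+1) + 1) := by
        rw [← Finset.sum_mul, hb]
      rw [hrw] at hsum
      have h5 : (xi (s+1) - 1) * xi (m - (s+1) + 1) ≥ - xi (m - (s+1) + 1) := by
        have := xi_pos (m - (s+1) + 1)
        nlinarith [xi_le_one (s+1), xi_pos (s+1)]
      linarith
    have hxx : xi (m - (s+1) + 1) ≤ xi (m - (s+1)) := xi_le (by omega)
    have hbb : xi m / 2 * beta (s+1) ≤ 0 := by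
      have := beta_succ_nonpos s
      have := xi_pos m
      nlinarith
    rw [cseq]
    linarith

/-- The row identity: `∑_{k≤t} c_k ξ_{t-k} = ξ_{m-t} - (ξ_m/2)[t=0]`. -/
lemma row_identity (m t : ℕ) (ht : t ≤ m) :
    ∑ k ∈ range (t+1), cseq m k * xi (t - k)
      = xi (m - t) - xi m / 2 * (if t = 0 then 1 else 0) := by
  have hsplit : ∑ k ∈ range (t+1), cseq m k * xi (t - k)
      = ∑ k ∈ range (t+1), Aseq m k * xi (t - k)
        - xi m / 2 * ∑ k ∈ range (t+1), beta k * xi (t - k) := by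
    rw [Finset.mul_sum, ← Finset.sum_sub_distrib]
    exact Finset.sum_congr rfl (fun k _ => by rw [cseq]; ring)
  rw [hsplit, beta_conv]
  congr 1
  -- K2 : ∑ A_k ξ_{t-k} = ξ_{m-t}
  have e1 : ∑ k ∈ range (t+1), Aseq m k * xi (t - k)
      = ∑ k ∈ range (t+1), ∑ j ∈ range (k+1),
          (fun j l => beta j * xi (m - l) * xi (t - j - l)) j (k - j) := by
    apply Finset.sum_congr rfl
    intro k hk
    simp only [Finset.mem_range] at hk
    rw [Aseq, Finset.sum_mul]
    apply Finset.sum_congr rfl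
    intro j hj
    simp only [Finset.mem_range] at hj
    have e2 : m - k + j = m - (k - j) := by omega
    have e3 : t - k = t - j - (k - j) := by omega
    rw [e2, e3]
  rw [e1, ← tri_eq (fun j l => beta j * xi (m - l) * xi (t - j - l)) t,
    tri_swap (fun j l => beta j * xi (m - l) * xi (t - j - l)) t]
  have e4 : ∀ l ∈ range (t+1), ∑ j ∈ range (t+1-l), beta j * xi (m - l) * xi (t - j - l)
      = xi (m - l) * (if t - l = 0 then 1 else 0) := by
    intro l hl
    simp only [Finset.mem_range] at hl
    have e5 : t + 1 - l = (t - l) + 1 := by omega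
    rw [e5]
    have e6 : ∀ j ∈ range ((t-l)+1), beta j * xi (m - l) * xi (t - j - l)
        = xi (m - l) * (beta j * xi ((t - l) - j)) := by
      intro j hj
      simp only [Finset.mem_range] at hj
      have : t - j - l = (t - l) - j := by omega
      rw [this]; ring
    rw [Finset.sum_congr rfl e6, ← Finset.mul_sum, beta_conv]
  rw [Finset.sum_congr rfl e4]
  have e8 : ∀ l ∈ range (t+1), xi (m - l) * (if t - l = 0 then 1 else 0)
      = if l = t then xi (m - l) else 0 := by
    intro l hl
    simp only [Finset.mem_range] at hl
    have hiff : (t - l = 0) ↔ (l = t) := by omega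
    simp [hiff, mul_ite]
  rw [Finset.sum_congr rfl e8, Finset.sum_ite_eq' (range (t+1)) t (fun l => xi (m - l))]
  simp

/-- Total sum of the coefficients. -/
lemma cseq_total (m : ℕ) :
    ∑ k ∈ range (m+1), cseq m k = ∑ i ∈ range (m+1), (xi i)^2 - (xi m)^2 / 2 := by
  have hsplit : ∑ k ∈ range (m+1), cseq m k
      = ∑ k ∈ range (m+1), Aseq m k - xi m / 2 * ∑ k ∈ range (m+1), beta k := by
    rw [Finset.mul_sum, ← Finset.sum_sub_distrib]
    exact Finset.sum_congr rfl (fun k _ => by rw [cseq])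
  rw [hsplit, beta_partial]
  have e1 : ∑ k ∈ range (m+1), Aseq m k
      = ∑ k ∈ range (m+1), ∑ j ∈ range (k+1),
          (fun j l => beta j * xi (m - l)) j (k - j) := by
    apply Finset.sum_congr rfl
    intro k hk
    simp only [Finset.mem_range] at hk
    rw [Aseq]
    apply Finset.sum_congr rfl
    intro j hj
    simp only [Finset.mem_range] at hj
    have e2 : m - k + j = m - (k - j) := by omega
    rw [e2]
  rw [e1, ← tri_eq (fun j l => beta j * xi (m - l)) m, tri_swap (fun j l => beta j * xi (m - l)) m]
  have e4 : ∀ l ∈ range (m+1), ∑ j ∈ range (m+1-l), beta j * xi (m - l)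
      = xi (m - l) * xi (m - l) := by
    intro l hl
    simp only [Finset.mem_range] at hl
    have e5 : m + 1 - l = (m - l) + 1 := by omega
    rw [e5, ← Finset.sum_mul, beta_partial]
  rw [Finset.sum_congr rfl e4]
  have e7 : ∑ l ∈ range (m+1), xi (m - l) * xi (m - l) = ∑ i ∈ range (m+1), (xi i)^2 := by
    rw [← Finset.sum_range_reflect (fun i => (xi i)^2) (m+1)]
    apply Finset.sum_congr rfl
    intro l hl
    simp only [Finset.mem_range] at hl
    have : m + 1 - 1 - l = m - l := by omega
    rw [this]; ring
  rw [e7]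
  ring

section bridge
variable {n : ℕ} (M : Matrix (Fin n) (Fin n) ℝ)

lemma clm_apply_coord (v : EuclideanSpace ℝ (Fin n)) (i : Fin n) :
    (Matrix.toEuclideanCLM (𝕜 := ℝ) M v) i = ∑ j : Fin n, M i j * v j := by
  have h : v = (WithLp.equiv 2 (Fin n → ℝ)).symm ((WithLp.equiv 2 (Fin n → ℝ)) v) := rfl
  rw [h, Matrix.ofLp_toEuclideanCLM]
  simp [Matrix.toLin'_apply, Matrix.mulVec, dotProduct]

lemma inner_clm (u v : EuclideanSpace ℝ (Fin n)) :
    ⟪u, Matrix.toEuclideanCLM (𝕜 := ℝ) M v⟫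
      = ∑ i : Fin n, ∑ j : Fin n, u i * (M i j * v j) := by
  rw [PiLp.inner_apply]
  apply Finset.sum_congr rfl
  intro i _
  rw [clm_apply_coord]
  simp [RCLike.inner_apply, starRingEnd_apply, star_trivial, Finset.mul_sum]
  rw [Finset.sum_mul]; exact Finset.sum_congr rfl fun _ _ => mul_comm _ _

lemma clm_selfAdjoint (hsym : ∀ i j, M i j = M j i) (u v : EuclideanSpace ℝ (Fin n)) :
    ⟪Matrix.toEuclideanCLM (𝕜 := ℝ) M u, v⟫ = ⟪u, Matrix.toEuclideanCLM (𝕜 := ℝ) M v⟫ := by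
  rw [real_inner_comm, inner_clm, inner_clm]
  rw [Finset.sum_comm]
  apply Finset.sum_congr rfl; intro i _
  apply Finset.sum_congr rfl; intro j _
  rw [hsym i j]; ring

lemma opNorm_le_one_of_qf (hsym : ∀ i j, M i j = M j i)
    (hq : ∀ x : EuclideanSpace ℝ (Fin n), |⟪x, Matrix.toEuclideanCLM (𝕜 := ℝ) M x⟫| ≤ ‖x‖^2) :
    sNorm M ≤ 1 := by
  set A := Matrix.toEuclideanCLM (𝕜 := ℝ) M with hA
  have hbil : ∀ x y : EuclideanSpace ℝ (Fin n), |⟪x, A y⟫| ≤ (‖x‖^2 + ‖y‖^2)/2 := by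
    intro x y
    have hpol : 4 * ⟪x, A y⟫ = ⟪x + y, A (x + y)⟫ - ⟪x - y, A (x - y)⟫ := by
      have e1 : A (x + y) = A x + A y := map_add A x y
      have e2 : A (x - y) = A x - A y := map_sub A x y
      have c1 : ⟪y, A x⟫ = ⟪x, A y⟫ := by
        rw [← clm_selfAdjoint M hsym y x]
        exact real_inner_comm _ _
      rw [e1, e2, inner_add_left, inner_sub_left, inner_add_right, inner_add_right,
        inner_sub_right, inner_sub_right]
      linarith [c1]
    have h1 := hq (x + y)
    have h2 := hq (x - y)
    have hpar : ‖x + y‖^2 + ‖x - y‖^2 = 2*‖x‖^2 + 2*‖y‖^2 := by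
      rw [norm_add_sq_real, norm_sub_sq_real]; ring
    rw [abs_le] at h1 h2 ⊢
    constructor <;> nlinarith [h1.1, h1.2, h2.1, h2.2]
  have hnorm : ∀ y : EuclideanSpace ℝ (Fin n), ‖A y‖ ≤ 1 * ‖y‖ := by
    intro y
    have h3 : ‖A y‖^2 = ⟪A y, A y⟫ := (real_inner_self_eq_norm_sq _).symm
    have h4 := hbil (A y) y
    rw [← h3] at h4
    have h5 : ‖A y‖^2 ≤ ‖y‖^2 := by
      have h6 : |‖A y‖^2| = ‖A y‖^2 := abs_of_nonneg (by positivity)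
      linarith [h4, h6.symm.le, le_abs_self (‖A y‖^2)]
    nlinarith [norm_nonneg (A y), norm_nonneg y]
  rw [sNorm, ← hA]
  exact A.opNorm_le_bound (by norm_num) hnorm
end bridge

noncomputable def rf (m j : ℕ) : ℝ := xi (min j (2*m - j))

noncomputable def gam (m s : ℕ) : ℝ := if 1 ≤ s ∧ s ≤ m+1 then cseq m (m+1-s) else 0

lemma rf_pos (m j : ℕ) : 0 < rf m j := xi_pos _

lemma rf_zero (m : ℕ) : rf m 0 = 1 := by simp [rf, xi_zero]

lemma rf_left (m j : ℕ) (h : j ≤ m) : rf m j = xi j := by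
  have : min j (2*m - j) = j := by omega
  rw [rf, this]

lemma rf_right (m j : ℕ) (h : m ≤ j) : rf m j = xi (2*m - j) := by
  have : min j (2*m - j) = 2*m - j := by omega
  rw [rf, this]

lemma xi_le_rf (m j : ℕ) : xi j ≤ rf m j := xi_le (min_le_left _ _)

lemma xi_le_rf' (m j : ℕ) : xi (2*m - j) ≤ rf m j := xi_le (min_le_right _ _)

lemma gam_nonneg (m s : ℕ) : 0 ≤ gam m s := by
  rw [gam]
  split_ifs with h
  · exact cseq_nonneg m (m+1-s) (by omega)
  · exact le_refl 0
lemma gam_eq (m k : ℕ) (hk : k ≤ m) : gam m (m+1-k) = cseq m k := by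
  rw [gam, if_pos (by omega : 1 ≤ m+1-k ∧ m+1-k ≤ m+1)]
  congr 1
  omega

lemma gam_zero_far (m s : ℕ) (h : m + 1 < s) : gam m s = 0 := by
  rw [gam, if_neg (by omega)]

/-- The eigenvector equation: each row of the Toeplitz matrix applied to `rf` gives `rf`. -/
lemma Trow (m : ℕ) (hm : 1 ≤ m) : ∀ i ≤ 2*m,
    ∑ j ∈ range (2*m+1), gam m (2*m+1 - (max i j - min i j)) * rf m j = rf m i := by
  have main : ∀ i ≤ m,
      ∑ j ∈ range (2*m+1), gam m (2*m+1 - (max i j - min i j)) * rf m j = rf m i := by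
    intro i hi
    have hsplit : ∑ j ∈ range (2*m+1), gam m (2*m+1 - (max i j - min i j)) * rf m j
        = ∑ j ∈ Ico 0 (i+m), gam m (2*m+1 - (max i j - min i j)) * rf m j
          + ∑ j ∈ Ico (i+m) (2*m+1), gam m (2*m+1 - (max i j - min i j)) * rf m j := by
      rw [Finset.range_eq_Ico, ← Finset.sum_Ico_consecutive _ (Nat.zero_le (i+m)) (by omega)]
    have hA : ∑ j ∈ Ico 0 (i+m), gam m (2*m+1 - (max i j - min i j)) * rf m j
        = if i = m then cseq m 0 else 0 := by
      split_ifs with him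
      · simp only [him]
        rw [Finset.sum_eq_single_of_mem 0 (by simp [Finset.mem_Ico]; omega)]
        · have h0 : max m 0 - min m 0 = m := by omega
          rw [h0]
          have h1 : 2*m+1 - m = m+1-0 := by omega
          rw [h1, gam_eq m 0 (by omega), rf_zero]
          ring
        · intro j hj hj0
          simp only [Finset.mem_Ico] at hj
          have hd : max m j - min m j < m := by omega
          rw [gam_zero_far m _ (by omega)]
          ring
      · apply Finset.sum_eq_zero
        intro j hj
        simp only [Finset.mem_Ico] at hj
        have hd : max i j - min i j < m := by omega
        rw [gam_zero_far m _ (by omega)]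
        ring
    have hB : ∑ j ∈ Ico (i+m) (2*m+1), gam m (2*m+1 - (max i j - min i j)) * rf m j
        = xi i - xi m / 2 * (if i = m then 1 else 0) := by
      rw [Finset.sum_Ico_eq_sum_range]
      have hn : 2*m+1 - (i+m) = (m-i)+1 := by omega
      rw [hn]
      have hterm : ∀ k ∈ range ((m-i)+1),
          gam m (2*m+1 - (max i (i+m+k) - min i (i+m+k))) * rf m (i+m+k)
            = cseq m k * xi ((m-i) - k) := by
        intro k hk
        simp only [Finset.mem_range] at hk
        have h1 : max i (i+m+k) - min i (i+m+k) = m+k := by omega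
        have h2 : 2*m+1 - (m+k) = m+1-k := by omega
        rw [h1, h2, gam_eq m k (by omega), rf_right m _ (by omega)]
        have h3 : 2*m - (i+m+k) = (m-i) - k := by omega
        rw [h3]
      calc ∑ k ∈ range ((m-i)+1),
            gam m (2*m+1 - (max i (i+m+k) - min i (i+m+k))) * rf m (i+m+k)
          = ∑ k ∈ range ((m-i)+1), cseq m k * xi ((m-i) - k) :=
            Finset.sum_congr rfl hterm
        _ = xi (m - (m-i)) - xi m / 2 * (if m-i = 0 then 1 else 0) :=
            row_identity m (m-i) (by omega)
        _ = xi i - xi m / 2 * (if i = m then 1 else 0) := by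
            have h4 : m - (m-i) = i := by omega
            have h5 : (m-i = 0) ↔ (i = m) := by omega
            simp only [h4, h5]
    rw [hsplit, hA, hB]
    split_ifs with him
    · simp only [him]
      rw [cseq_zero, rf_left m m (le_refl m)]
      ring
    · rw [rf_left m i hi]
      ring
  intro i hi
  rcases le_or_gt i m with him | him
  · exact main i him
  · have hrefl : ∑ j ∈ range (2*m+1), gam m (2*m+1 - (max i j - min i j)) * rf m j
        = ∑ j ∈ range (2*m+1), gam m (2*m+1 - (max (2*m-i) j - min (2*m-i) j)) * rf m j := by
      rw [← Finset.sum_range_reflect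
        (fun j => gam m (2*m+1 - (max i j - min i j)) * rf m j) (2*m+1)]
      apply Finset.sum_congr rfl
      intro j hj
      simp only [Finset.mem_range] at hj
      have e1 : 2*m+1-1-j = 2*m-j := by omega
      rw [e1]
      have e2 : max i (2*m-j) - min i (2*m-j) = max (2*m-i) j - min (2*m-i) j := by omega
      rw [e2]
      have e3 : rf m (2*m-j) = rf m j := by
        rw [rf, rf]
        congr 1
        omega
      rw [e3]
    rw [hrefl, main (2*m-i) (by omega)]
    rw [rf, rf]
    congr 1
    omega

/-- Norm-squared of the witness vector. -/
lemma rf_norm_sq (m : ℕ) :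
    ∑ i ∈ range (2*m+1), (rf m i)^2 = 2 * ∑ i ∈ range m, (xi i)^2 + (xi m)^2 := by
  have hsplit : ∑ i ∈ range (2*m+1), (rf m i)^2
      = ∑ i ∈ Ico 0 m, (rf m i)^2 + ∑ i ∈ Ico m (2*m+1), (rf m i)^2 := by
    rw [Finset.range_eq_Ico, ← Finset.sum_Ico_consecutive _ (Nat.zero_le m) (by omega)]
  have h1 : ∑ i ∈ Ico 0 m, (rf m i)^2 = ∑ i ∈ range m, (xi i)^2 := by
    rw [← Finset.range_eq_Ico]
    apply Finset.sum_congr rfl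
    intro i hi
    simp only [Finset.mem_range] at hi
    rw [rf_left m i (by omega)]
  have h2 : ∑ i ∈ Ico m (2*m+1), (rf m i)^2 = ∑ i ∈ range (m+1), (xi i)^2 := by
    rw [Finset.sum_Ico_eq_sum_range]
    have hn : 2*m+1 - m = m+1 := by omega
    rw [hn]
    rw [← Finset.sum_range_reflect (fun i => (xi i)^2) (m+1)]
    apply Finset.sum_congr rfl
    intro k hk
    simp only [Finset.mem_range] at hk
    rw [rf_right m (m+k) (by omega)]
    have : 2*m - (m+k) = m+1-1-k := by omega
    rw [this]
  rw [hsplit, h1, h2, Finset.sum_range_succ]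
  ring

/-- Value of the objective at the witness `gam`. -/
lemma gam_value (m : ℕ) (hm : 1 ≤ m) :
    gam m (2*m+1) + 2 * ∑ i ∈ Icc 1 (2*m), gam m i
      = 2 * ∑ i ∈ range m, (xi i)^2 + (xi m)^2 := by
  have h0 : gam m (2*m+1) = 0 := gam_zero_far m _ (by omega)
  have h1 : ∑ i ∈ Icc 1 (2*m), gam m i = ∑ i ∈ Icc 1 (m+1), gam m i := by
    rw [← Finset.sum_subset (Finset.Icc_subset_Icc_right (by omega : m+1 ≤ 2*m))]
    intro x hx hnx
    simp only [Finset.mem_Icc] at hx hnx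
    exact gam_zero_far m x (by omega)
  have h2 : ∑ i ∈ Icc 1 (m+1), gam m i = ∑ k ∈ range (m+1), gam m (1+k) := by
    have : Icc 1 (m+1) = Ico 1 (m+2) := by
      exact (Finset.Ico_add_one_right_eq_Icc 1 (m+1)).symm
    rw [this, Finset.sum_Ico_eq_sum_range]
    have : m + 2 - 1 = m + 1 := by omega
    rw [this]
  have h3 : ∑ k ∈ range (m+1), gam m (1+k) = ∑ k ∈ range (m+1), cseq m (m-k) := by
    apply Finset.sum_congr rfl
    intro k hk
    simp only [Finset.mem_range] at hk
    have e : 1 + k = m+1-(m-k) := by omega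
    rw [e, gam_eq m (m-k) (by omega)]
  have h4 : ∑ k ∈ range (m+1), cseq m (m-k) = ∑ k ∈ range (m+1), cseq m k := by
    rw [← Finset.sum_range_reflect (fun k => cseq m k) (m+1)]
    apply Finset.sum_congr rfl
    intro k hk
    simp only [Finset.mem_range] at hk
    congr 1
  rw [h0, h1, h2, h3, h4, cseq_total, Finset.sum_range_succ]
  ring

/-- The quadratic form of the witness Toeplitz matrix is bounded by the identity. -/
lemma qf_abs (m : ℕ) (hm : 1 ≤ m) (x : ℕ → ℝ) :
    |∑ i ∈ range (2*m+1), ∑ j ∈ range (2*m+1),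
        x i * (gam m (2*m+1 - (max i j - min i j)) * x j)|
      ≤ ∑ i ∈ range (2*m+1), (x i)^2 := by
  have hsym : ∀ i j : ℕ, max i j - min i j = max j i - min j i := by intro i j; omega
  have habs : |∑ i ∈ range (2*m+1), ∑ j ∈ range (2*m+1),
        x i * (gam m (2*m+1 - (max i j - min i j)) * x j)|
      ≤ ∑ i ∈ range (2*m+1), ∑ j ∈ range (2*m+1),
          |x i * (gam m (2*m+1 - (max i j - min i j)) * x j)| := by
    calc |∑ i ∈ range (2*m+1), ∑ j ∈ range (2*m+1),
        x i * (gam m (2*m+1 - (max i j - min i j)) * x j)|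
        ≤ ∑ i ∈ range (2*m+1), |∑ j ∈ range (2*m+1),
            x i * (gam m (2*m+1 - (max i j - min i j)) * x j)| :=
          Finset.abs_sum_le_sum_abs _ _
      _ ≤ ∑ i ∈ range (2*m+1), ∑ j ∈ range (2*m+1),
            |x i * (gam m (2*m+1 - (max i j - min i j)) * x j)| :=
          Finset.sum_le_sum (fun i _ => Finset.abs_sum_le_sum_abs _ _)
  have hterm : ∀ i ∈ range (2*m+1), ∀ j ∈ range (2*m+1),
      |x i * (gam m (2*m+1 - (max i j - min i j)) * x j)|
        ≤ (x i)^2 * (gam m (2*m+1 - (max i j - min i j)) * rf m j) / (2 * rf m i)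
          + (x j)^2 * (gam m (2*m+1 - (max i j - min i j)) * rf m i) / (2 * rf m j) := by
    intro i _ j _
    set g := gam m (2*m+1 - (max i j - min i j)) with hg
    have hg0 : 0 ≤ g := gam_nonneg _ _
    have ha : 0 < rf m i := rf_pos m i
    have hb : 0 < rf m j := rf_pos m j
    have habs2 : |x i * (g * x j)| = g * (|x i| * |x j|) := by
      rw [abs_mul, abs_mul, abs_of_nonneg hg0]; ring
    have gen : ∀ u v : ℝ, 0 ≤ u → 0 ≤ v →
        g*(u*v) ≤ u^2*(g*rf m j)/(2*rf m i) + v^2*(g*rf m i)/(2*rf m j) := by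
      intro u v hu hv
      have e : u^2*(g*rf m j)/(2*rf m i) + v^2*(g*rf m i)/(2*rf m j) - g*(u*v)
          = g * (rf m j * u - rf m i * v)^2 / (2 * rf m i * rf m j) := by
        field_simp
        ring
      nlinarith [div_nonneg (mul_nonneg hg0 (sq_nonneg (rf m j * u - rf m i * v)))
        (by positivity : (0:ℝ) ≤ 2 * rf m i * rf m j)]
    rw [habs2, ← sq_abs (x i), ← sq_abs (x j)]
    exact gen |x i| |x j| (abs_nonneg _) (abs_nonneg _)
  have hkey1 : ∑ i ∈ range (2*m+1), ∑ j ∈ range (2*m+1),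
      (x i)^2 * (gam m (2*m+1 - (max i j - min i j)) * rf m j) / (2 * rf m i)
      = ∑ i ∈ range (2*m+1), (x i)^2 / 2 := by
    apply Finset.sum_congr rfl
    intro i hi
    simp only [Finset.mem_range] at hi
    have e1 : ∀ j ∈ range (2*m+1),
        (x i)^2 * (gam m (2*m+1 - (max i j - min i j)) * rf m j) / (2 * rf m i)
          = ((x i)^2 / (2 * rf m i)) * (gam m (2*m+1 - (max i j - min i j)) * rf m j) := by
      intro j _; ring
    rw [Finset.sum_congr rfl e1, ← Finset.mul_sum, Trow m hm i (by omega)]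
    have : rf m i ≠ 0 := ne_of_gt (rf_pos m i)
    field_simp
  have hkey2 : ∑ i ∈ range (2*m+1), ∑ j ∈ range (2*m+1),
      (x j)^2 * (gam m (2*m+1 - (max i j - min i j)) * rf m i) / (2 * rf m j)
      = ∑ i ∈ range (2*m+1), (x i)^2 / 2 := by
    rw [Finset.sum_comm]
    apply Finset.sum_congr rfl
    intro j hj
    simp only [Finset.mem_range] at hj
    have e1 : ∀ i ∈ range (2*m+1),
        (x j)^2 * (gam m (2*m+1 - (max i j - min i j)) * rf m i) / (2 * rf m j)
          = ((x j)^2 / (2 * rf m j)) * (gam m (2*m+1 - (max j i - min j i)) * rf m i) := by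
      intro i _
      rw [hsym i j]; ring
    rw [Finset.sum_congr rfl e1, ← Finset.mul_sum, Trow m hm j (by omega)]
    have : rf m j ≠ 0 := ne_of_gt (rf_pos m j)
    field_simp
  have hsum : ∑ i ∈ range (2*m+1), ∑ j ∈ range (2*m+1),
          |x i * (gam m (2*m+1 - (max i j - min i j)) * x j)|
      ≤ ∑ i ∈ range (2*m+1), (x i)^2 := by
    calc ∑ i ∈ range (2*m+1), ∑ j ∈ range (2*m+1),
          |x i * (gam m (2*m+1 - (max i j - min i j)) * x j)|
        ≤ ∑ i ∈ range (2*m+1), ∑ j ∈ range (2*m+1),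
            ((x i)^2 * (gam m (2*m+1 - (max i j - min i j)) * rf m j) / (2 * rf m i)
              + (x j)^2 * (gam m (2*m+1 - (max i j - min i j)) * rf m i) / (2 * rf m j)) := by
          apply Finset.sum_le_sum
          intro i hi
          apply Finset.sum_le_sum
          intro j hj
          exact hterm i hi j hj
      _ = (∑ i ∈ range (2*m+1), ∑ j ∈ range (2*m+1),
              (x i)^2 * (gam m (2*m+1 - (max i j - min i j)) * rf m j) / (2 * rf m i))
            + (∑ i ∈ range (2*m+1), ∑ j ∈ range (2*m+1),
              (x j)^2 * (gam m (2*m+1 - (max i j - min i j)) * rf m i) / (2 * rf m j)) := by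
          rw [← Finset.sum_add_distrib]
          apply Finset.sum_congr rfl
          intro i _
          rw [← Finset.sum_add_distrib]
      _ = ∑ i ∈ range (2*m+1), (x i)^2 / 2 + ∑ i ∈ range (2*m+1), (x i)^2 / 2 := by
          rw [hkey1, hkey2]
      _ = ∑ i ∈ range (2*m+1), (x i)^2 := by
          rw [← Finset.sum_add_distrib]
          apply Finset.sum_congr rfl
          intro i _; ring
  linarith

/-- Lower bound on the quadratic form of a feasible Toeplitz matrix at the witness vector. -/
lemma corr_bound (m : ℕ) (hm : 1 ≤ m) (γ : ℕ → ℝ)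
    (hpos : ∀ i, 1 ≤ i → i ≤ 2*m+1 → 0 ≤ γ i) :
    γ (2*m+1) + 2 * ∑ i ∈ Icc 1 (2*m), γ i
      ≤ ∑ i ∈ range (2*m+1), ∑ j ∈ range (2*m+1),
          rf m i * (γ (2*m+1 - (max i j - min i j)) * rf m j) := by
  have hFsym : ∀ i j, rf m i * (γ (2*m+1 - (max i j - min i j)) * rf m j)
      = rf m j * (γ (2*m+1 - (max j i - min j i)) * rf m i) := by
    intro i j
    have : max i j - min i j = max j i - min j i := by omega
    rw [this]; ring
  rw [show (2*m+1) = (2*m)+1 from rfl,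
    double_sum_split (fun i j => rf m i * (γ (2*m+1 - (max i j - min i j)) * rf m j)) hFsym (2*m)]
  have hdiag : γ (2*m+1) ≤ ∑ i ∈ range (2*m+1),
      rf m i * (γ (2*m+1 - (max i i - min i i)) * rf m i) := by
    have hterm : ∀ i ∈ range (2*m+1), (0:ℝ) ≤ rf m i * (γ (2*m+1 - (max i i - min i i)) * rf m i) := by
      intro i _
      have e : max i i - min i i = 0 := by omega
      rw [e]
      have := hpos (2*m+1) (by omega) (by omega)
      have := rf_pos m i
      positivity
    have h0 : rf m 0 * (γ (2*m+1 - (max 0 0 - min 0 0)) * rf m 0) = γ (2*m+1) := by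
      simp [rf_zero]
    calc γ (2*m+1) = rf m 0 * (γ (2*m+1 - (max 0 0 - min 0 0)) * rf m 0) := h0.symm
      _ ≤ _ := Finset.single_le_sum hterm (by simp)
  have hoff : ∑ i ∈ Icc 1 (2*m), γ i
      ≤ ∑ l ∈ range (2*m), ∑ i ∈ range (2*m-l),
          rf m i * (γ (2*m+1 - (max i (i+l+1) - min i (i+l+1))) * rf m (i+l+1)) := by
    have hinner : ∀ l ∈ range (2*m), γ (2*m-l)
        ≤ ∑ i ∈ range (2*m-l),
            rf m i * (γ (2*m+1 - (max i (i+l+1) - min i (i+l+1))) * rf m (i+l+1)) := by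
      intro l hl
      simp only [Finset.mem_range] at hl
      have hterm : ∀ i ∈ range (2*m-l),
          xi i * xi ((2*m-l-1) - i) * γ (2*m-l)
            ≤ rf m i * (γ (2*m+1 - (max i (i+l+1) - min i (i+l+1))) * rf m (i+l+1)) := by
        intro i hi
        simp only [Finset.mem_range] at hi
        have e1 : max i (i+l+1) - min i (i+l+1) = l+1 := by omega
        rw [e1]
        have e2 : 2*m+1 - (l+1) = 2*m-l := by omega
        rw [e2]
        have hg : 0 ≤ γ (2*m-l) := hpos _ (by omega) (by omega)
        have h1 : xi i ≤ rf m i := xi_le_rf m i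
        have h2 : xi ((2*m-l-1) - i) ≤ rf m (i+l+1) := by
          have e3 : (2*m-l-1) - i ≤ 2*m - (i+l+1) := by omega
          calc xi ((2*m-l-1) - i) ≤ xi (2*m - (i+l+1)) := by
                have e4 : 2*m - (i+l+1) = (2*m-l-1) - i := by omega
                rw [e4]
            _ ≤ rf m (i+l+1) := xi_le_rf' m (i+l+1)
        have hxi1 := xi_pos i
        have hxi2 := xi_pos ((2*m-l-1) - i)
        have hrf1 := rf_pos m i
        have hrf2 := rf_pos m (i+l+1)
        have hmm : xi i * xi ((2*m-l-1) - i) ≤ rf m i * rf m (i+l+1) :=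
          mul_le_mul h1 h2 (le_of_lt hxi2) (le_of_lt hrf1)
        nlinarith [mul_le_mul_of_nonneg_right hmm hg]
      have hconv : ∑ i ∈ range (2*m-l), xi i * xi ((2*m-l-1) - i) = 1 := by
        have hx := xi_conv (2*m-l-1)
        rw [show (2*m-l-1)+1 = 2*m-l by omega] at hx
        exact hx
      calc γ (2*m-l) = (∑ i ∈ range (2*m-l), xi i * xi ((2*m-l-1) - i)) * γ (2*m-l) := by
            rw [hconv]; ring
        _ = ∑ i ∈ range (2*m-l), xi i * xi ((2*m-l-1) - i) * γ (2*m-l) := by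
            rw [Finset.sum_mul]
        _ ≤ _ := Finset.sum_le_sum hterm
    have hre : ∑ l ∈ range (2*m), γ (2*m-l) = ∑ i ∈ Icc 1 (2*m), γ i := by
      have h6 : ∑ l ∈ range (2*m), γ (2*m-l) = ∑ l ∈ range (2*m), γ (l+1) := by
        rw [← Finset.sum_range_reflect (fun l => γ (l+1)) (2*m)]
        apply Finset.sum_congr rfl
        intro l hl
        simp only [Finset.mem_range] at hl
        congr 1
        omega
      have h7 : ∑ i ∈ Icc 1 (2*m), γ i = ∑ l ∈ range (2*m), γ (1+l) := by
        rw [← Finset.Ico_add_one_right_eq_Icc, Finset.sum_Ico_eq_sum_range]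
        norm_num
      rw [h6, h7]
      apply Finset.sum_congr rfl
      intro l _
      congr 1
      omega
    calc ∑ i ∈ Icc 1 (2*m), γ i = ∑ l ∈ range (2*m), γ (2*m-l) := hre.symm
      _ ≤ _ := Finset.sum_le_sum hinner
  linarith

lemma fin_double (n : ℕ) (g : ℕ → ℕ → ℝ) :
    ∑ i : Fin n, ∑ j : Fin n, g i.val j.val = ∑ i ∈ range n, ∑ j ∈ range n, g i j := by
  rw [← Fin.sum_univ_eq_sum_range (fun i => ∑ j ∈ range n, g i j) n]
  exact Finset.sum_congr rfl fun i _ => Fin.sum_univ_eq_sum_range (fun j => g i.val j) n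

lemma euclid_norm_sq {n : ℕ} (x : EuclideanSpace ℝ (Fin n)) :
    ‖x‖^2 = ∑ i : Fin n, (x i)^2 := by
  rw [← real_inner_self_eq_norm_sq, PiLp.inner_apply]
  apply Finset.sum_congr rfl
  intro i _
  simp [RCLike.inner_apply, starRingEnd_apply, star_trivial, sq]

lemma toeplitz_symm (n : ℕ) (γ : ℕ → ℝ) (i j : Fin n) :
    toeplitz n γ i j = toeplitz n γ j i := by
  simp only [toeplitz, Matrix.of_apply]
  congr 1
  omega

/-- Let `m ≥ 1` and `n = 2m+1`.  The maximum of `γ_n + 2 ∑_{i=1}^{n−1} γ_i` over all tuples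
`(γ_1, …, γ_n)` of nonnegative reals with `‖Toeplitz(γ_n, …, γ_1)‖ ≤ 1` is attained and
equals `2 ∑_{i=0}^{m−1} ξ_i² + ξ_m²`. -/
theorem adversary_odd (m : ℕ) (hm : 1 ≤ m) :
    IsGreatest
      {x : ℝ | ∃ γ : ℕ → ℝ,
        (∀ i, 1 ≤ i → i ≤ 2 * m + 1 → 0 ≤ γ i) ∧
        sNorm (toeplitz (2 * m + 1) γ) ≤ 1 ∧
        x = γ (2 * m + 1) + 2 * ∑ i ∈ Finset.Icc 1 (2 * m + 1 - 1), γ i}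
      (2 * ∑ i ∈ Finset.range m, (xi i) ^ 2 + (xi m) ^ 2) := by
  constructor
  · -- membership
    refine ⟨gam m, fun i _ _ => gam_nonneg m i, ?_, ?_⟩
    · apply opNorm_le_one_of_qf _ (toeplitz_symm _ _)
      intro x
      rw [inner_clm]
      set x' : ℕ → ℝ := fun k => if h : k < 2*m+1 then x ⟨k, h⟩ else 0 with hx'
      have hxv : ∀ i : Fin (2*m+1), x i = x' i.val := by
        intro i
        rw [hx']
        simp [i.is_lt]
      have hEq : ∑ i : Fin (2*m+1), ∑ j : Fin (2*m+1),
            x i * ((toeplitz (2*m+1) (gam m)) i j * x j)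
          = ∑ i ∈ range (2*m+1), ∑ j ∈ range (2*m+1),
              x' i * (gam m (2*m+1 - (max i j - min i j)) * x' j) := by
        rw [← fin_double (2*m+1) (fun a b => x' a * (gam m (2*m+1 - (max a b - min a b)) * x' b))]
        apply Finset.sum_congr rfl; intro i _
        apply Finset.sum_congr rfl; intro j _
        rw [hxv i, hxv j]
        rfl
      rw [hEq]
      have hnx : ‖x‖^2 = ∑ i ∈ range (2*m+1), (x' i)^2 := by
        rw [euclid_norm_sq, ← Fin.sum_univ_eq_sum_range (fun k => (x' k)^2) (2*m+1)]
        exact Finset.sum_congr rfl fun i _ => by rw [hxv i]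
      rw [hnx]
      exact qf_abs m hm x'
    · have h := gam_value m hm
      have e : 2*m+1-1 = 2*m := by omega
      rw [e]
      linarith
  · -- upper bound
    rintro v ⟨γ, hpos, hnorm, hval⟩
    set A := Matrix.toEuclideanCLM (𝕜 := ℝ) (toeplitz (2*m+1) γ) with hA
    set u : EuclideanSpace ℝ (Fin (2*m+1)) :=
      (WithLp.equiv 2 (Fin (2*m+1) → ℝ)).symm (fun i => rf m i.val) with hu
    have hui : ∀ i : Fin (2*m+1), u i = rf m i.val := by
      intro i
      rw [hu]; rfl
    have h1 : ⟪u, A u⟫ = ∑ i ∈ range (2*m+1), ∑ j ∈ range (2*m+1),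
        rf m i * (γ (2*m+1 - (max i j - min i j)) * rf m j) := by
      rw [hA, inner_clm]
      rw [← fin_double (2*m+1) (fun a b => rf m a * (γ (2*m+1 - (max a b - min a b)) * rf m b))]
      apply Finset.sum_congr rfl; intro i _
      apply Finset.sum_congr rfl; intro j _
      rw [hui i, hui j]
      rfl
    have h2 : ‖u‖^2 = 2 * ∑ i ∈ range m, (xi i)^2 + (xi m)^2 := by
      rw [euclid_norm_sq, ← rf_norm_sq m,
        ← Fin.sum_univ_eq_sum_range (fun k => (rf m k)^2) (2*m+1)]
      exact Finset.sum_congr rfl fun i _ => by rw [hui i]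
    have h3 : ⟪u, A u⟫ ≤ sNorm (toeplitz (2*m+1) γ) * ‖u‖^2 := by
      calc ⟪u, A u⟫ ≤ ‖u‖ * ‖A u‖ := real_inner_le_norm u (A u)
        _ ≤ ‖u‖ * (‖A‖ * ‖u‖) :=
            mul_le_mul_of_nonneg_left (A.le_opNorm u) (norm_nonneg u)
        _ = ‖A‖ * ‖u‖^2 := by ring
    have h4 := corr_bound m hm γ hpos
    have e : 2*m+1-1 = 2*m := by omega
    rw [e] at hval
    have hnu : (0:ℝ) ≤ ‖u‖^2 := by positivity
    have h5 : sNorm (toeplitz (2*m+1) γ) * ‖u‖^2 ≤ 1 * ‖u‖^2 :=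
      mul_le_mul_of_nonneg_right hnorm hnu
    rw [hval]
    rw [← h1] at h4
    calc γ (2*m+1) + 2 * ∑ i ∈ Icc 1 (2*m), γ i ≤ ⟪u, A u⟫ := h4
      _ ≤ sNorm (toeplitz (2*m+1) γ) * ‖u‖^2 := h3
      _ ≤ 1 * ‖u‖^2 := h5
      _ = 2 * ∑ i ∈ range m, (xi i)^2 + (xi m)^2 := by rw [one_mul, h2]
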